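/- Let N₀, N₁, M be natural numbers, G an N₁×N₀ real matrix and C an M×N₁ real matrix with C · G = 0, and fix a ∈ ℝ^M. Define the observable 𝖢 : ℝ^{N₀} × ℝ^{N₁} → ℝ by 𝖢(ρ, v) = aᵀ (C v). Then for every function F : ℝ^{N₀} × ℝ^{N₁} → ℝ that is differentiable at (ρ, v), the discrete acoustic Poisson bracket of F and 𝖢 vanishes: {F, 𝖢}(ρ, v) = (∇_v F)ᵀ G (∇_ρ 𝖢) − (∇_v 𝖢)ᵀ G (∇_ρ F) = 0, where ∇_ρ and ∇_v denote the partial gradients with respect to the first and second arguments. That is, every component functional of the discrete vorticity C v is a Casimir invariant of the discrete acoustic Poisson bracket. -/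
import Mathlib


open Matrix

noncomputable def casLin (N₀ N₁ M : ℕ) (C : Matrix (Fin M) (Fin N₁) ℝ) (a : Fin M → ℝ) :
    ((Fin N₀ → ℝ) × (Fin N₁ → ℝ)) →L[ℝ] ℝ :=
  LinearMap.toContinuousLinearMap
    { toFun := fun x => a ⬝ᵥ C.mulVec x.2
      map_add' := by
        intro x y
        simp [Matrix.mulVec_add, dotProduct_add]
      map_smul' := by
        intro c x
        simp [Matrix.mulVec_smul, dotProduct_smul] }

lemma casLin_fderiv (N₀ N₁ M : ℕ) (C : Matrix (Fin M) (Fin N₁) ℝ) (a : Fin M → ℝ)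
    (p : (Fin N₀ → ℝ) × (Fin N₁ → ℝ)) :
    fderiv ℝ (fun x : (Fin N₀ → ℝ) × (Fin N₁ → ℝ) => a ⬝ᵥ C.mulVec x.2) p
      = casLin N₀ N₁ M C a := by
  have : (fun x : (Fin N₀ → ℝ) × (Fin N₁ → ℝ) => a ⬝ᵥ C.mulVec x.2)
      = casLin N₀ N₁ M C a := rfl
  rw [this]
  exact (casLin N₀ N₁ M C a).fderiv

/-- With `C G = 0`, the observable `𝖢(ρ, v) = aᵀ (C v)` is a Casimir of
the discrete acoustic Poisson bracket: for every `F` differentiable at `(ρ, v)`,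
`{F, 𝖢}(ρ, v) = (∇_v F)ᵀ G (∇_ρ 𝖢) − (∇_v 𝖢)ᵀ G (∇_ρ F) = 0`. -/
theorem discrete_vorticity_casimir
    (N₀ N₁ M : ℕ) (G : Matrix (Fin N₁) (Fin N₀) ℝ) (C : Matrix (Fin M) (Fin N₁) ℝ)
    (hCG : C * G = 0) (a : Fin M → ℝ)
    (ρ : Fin N₀ → ℝ) (v : Fin N₁ → ℝ)
    (F : (Fin N₀ → ℝ) × (Fin N₁ → ℝ) → ℝ)
    (hF : DifferentiableAt ℝ F (ρ, v)) :
    (fun j : Fin N₁ => fderiv ℝ F (ρ, v) (0, Pi.single j 1)) ⬝ᵥ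
        G.mulVec (fun i : Fin N₀ =>
          fderiv ℝ (fun x : (Fin N₀ → ℝ) × (Fin N₁ → ℝ) => a ⬝ᵥ C.mulVec x.2)
            (ρ, v) (Pi.single i 1, 0))
      - (fun j : Fin N₁ =>
          fderiv ℝ (fun x : (Fin N₀ → ℝ) × (Fin N₁ → ℝ) => a ⬝ᵥ C.mulVec x.2)
            (ρ, v) (0, Pi.single j 1)) ⬝ᵥ
        G.mulVec (fun i : Fin N₀ => fderiv ℝ F (ρ, v) (Pi.single i 1, 0))
      = 0 := by
  rw [casLin_fderiv N₀ N₁ M C a]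
  have h1 : (fun i : Fin N₀ => casLin N₀ N₁ M C a (Pi.single i 1, 0)) = 0 := by
    funext i
    show a ⬝ᵥ C.mulVec 0 = 0
    simp
  have h2 : (fun j : Fin N₁ => casLin N₀ N₁ M C a (0, Pi.single j 1)) = vecMul a C := by
    funext j
    show a ⬝ᵥ C.mulVec (Pi.single j 1) = _
    have : C.mulVec (Pi.single j 1) = fun i => C i j := by
      funext i
      simp [Matrix.mulVec, dotProduct, Pi.single_apply, mul_ite]
    rw [this]
    simp [Matrix.vecMul, dotProduct]
  rw [h1, h2]
  rw [Matrix.mulVec_zero, dotProduct_zero]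
  rw [Matrix.dotProduct_mulVec, Matrix.vecMul_vecMul, hCG]
  simp
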